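/- Let λ < -1/4 be such that λ ∈ B. Then there exists an integer n ≥ 1 such that the hard-core partition function of the path with n vertices is zero, i.e., Z_{P_n}(λ) = 0. -/

import Mathlib

open scoped Classical

/-- The set of independent sets of a finite simple graph `G`, as a `Finset` of `Finset`s
(including the empty set). -/
noncomputable def indepFinsets {V : Type*} [Fintype V] (G : SimpleGraph V) : Finset (Finset V) :=
  Finset.univ.filter fun I => ∀ u ∈ I, ∀ w ∈ I, ¬ G.Adj u w

/-- The hard-core partition function `Z_G(λ) = ∑_{I ∈ I_G} λ^{|I|}`. -/
noncomputable def hcZ {V : Type*} [Fintype V] (G : SimpleGraph V) (lam : ℝ) : ℝ :=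
  ∑ I ∈ indepFinsets G, lam ^ I.card

/-- `Z^{in}_{G,v}(λ)`: contribution of independent sets containing `v`. -/
noncomputable def hcZin {V : Type*} [Fintype V] (G : SimpleGraph V) (v : V) (lam : ℝ) : ℝ :=
  ∑ I ∈ (indepFinsets G).filter (fun I => v ∈ I), lam ^ I.card

/-- `Z^{out}_{G,v}(λ)`: contribution of independent sets not containing `v`. -/
noncomputable def hcZout {V : Type*} [Fintype V] (G : SimpleGraph V) (v : V) (lam : ℝ) : ℝ :=
  ∑ I ∈ (indepFinsets G).filter (fun I => v ∉ I), lam ^ I.card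

/-- The "bad" set `B`: reals `λ` of the form `-1/(4 cos² θ)` for some `θ ∈ (0, π/2)`
which is a rational multiple of `π`. -/
def badSet : Set ℝ :=
  {lam | ∃ θ : ℝ, θ ∈ Set.Ioo 0 (Real.pi / 2) ∧ (∃ q : ℚ, θ = (q : ℝ) * Real.pi) ∧
    lam = -1 / (4 * (Real.cos θ) ^ 2)}

open Finset SimpleGraph

lemma mem_indep {V : Type*} [Fintype V] {G : SimpleGraph V} {I : Finset V} :
    I ∈ indepFinsets G ↔ ∀ u ∈ I, ∀ w ∈ I, ¬ G.Adj u w := by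
  simp [indepFinsets]

lemma hc_out (lam : ℝ) (n : ℕ) :
    ∑ I ∈ (indepFinsets (SimpleGraph.pathGraph (n+2))).filter
        (fun I => Fin.last (n+1) ∉ I), lam ^ I.card
      = hcZ (SimpleGraph.pathGraph (n+1)) lam := by
  rw [hcZ]
  symm
  refine Finset.sum_nbij' (i := fun I => I.map ⟨Fin.castSucc, Fin.castSucc_injective _⟩)
    (j := fun J => Finset.univ.filter (fun i : Fin (n+1) => Fin.castSucc i ∈ J))
    ?_ ?_ ?_ ?_ ?_
  · intro I hI
    rw [Finset.mem_filter]
    refine ⟨?_, ?_⟩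
    · rw [mem_indep] at hI ⊢
      intro u hu w hw
      simp only [Finset.mem_map, Function.Embedding.coeFn_mk] at hu hw
      obtain ⟨u', hu', rfl⟩ := hu
      obtain ⟨w', hw', rfl⟩ := hw
      have := hI u' hu' w' hw'
      simp only [pathGraph_adj, Fin.coe_castSucc] at this ⊢
      exact this
    · simp only [Finset.mem_map, Function.Embedding.coeFn_mk, not_exists]
      rintro x ⟨hx, h⟩
      have := congrArg Fin.val h
      simp only [Fin.coe_castSucc, Fin.val_last] at this
      omega
  · intro J hJ
    rw [Finset.mem_filter] at hJ
    rw [mem_indep]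
    intro u hu w hw
    simp only [Finset.mem_filter, Finset.mem_univ, true_and] at hu hw
    have := (mem_indep.mp hJ.1) _ hu _ hw
    simp only [pathGraph_adj, Fin.coe_castSucc] at this ⊢
    exact this
  · intro I hI
    ext x
    simp [Fin.castSucc_inj]
  · intro J hJ
    rw [Finset.mem_filter] at hJ
    ext b
    simp only [Finset.mem_map, Finset.mem_filter, Finset.mem_univ, true_and,
      Function.Embedding.coeFn_mk]
    constructor
    · rintro ⟨a, ha, rfl⟩; exact ha
    · intro hb
      have hbne : b ≠ Fin.last (n+1) := by rintro rfl; exact hJ.2 hb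
      have hbv : b.val < n + 1 := Fin.val_lt_last hbne
      refine ⟨⟨b.val, hbv⟩, ?_, ?_⟩
      · have : (Fin.castSucc (⟨b.val, hbv⟩ : Fin (n+1))) = b := by
          simp [Fin.ext_iff]
        rwa [this]
      · simp [Fin.ext_iff]
  · intro I hI
    simp [Finset.card_map]

noncomputable def emb2 (n : ℕ) : Fin n ↪ Fin (n+2) :=
  Fin.castLEEmb (by omega)

lemma emb2_val (n : ℕ) (x : Fin n) : (emb2 n x).val = x.val := rfl

lemma hc_in (lam : ℝ) (n : ℕ) :
    ∑ I ∈ (indepFinsets (SimpleGraph.pathGraph (n+2))).filter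
        (fun I => Fin.last (n+1) ∈ I), lam ^ I.card
      = lam * hcZ (SimpleGraph.pathGraph n) lam := by
  rw [hcZ, Finset.mul_sum]
  symm
  refine Finset.sum_nbij' (i := fun I => insert (Fin.last (n+1)) (I.map (emb2 n)))
    (j := fun J => Finset.univ.filter (fun i : Fin n => emb2 n i ∈ J))
    ?_ ?_ ?_ ?_ ?_
  · intro I hI
    rw [Finset.mem_filter]
    refine ⟨?_, Finset.mem_insert_self _ _⟩
    rw [mem_indep] at hI ⊢
    intro u hu w hw
    simp only [Finset.mem_insert, Finset.mem_map] at hu hw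
    have hval : ∀ x : Fin n, ∀ b : Fin (n+2), emb2 n x = b → b.val < n := by
      rintro x b rfl
      exact (emb2_val n x) ▸ x.isLt
    rcases hu with rfl | ⟨u', hu', hu'e⟩ <;> rcases hw with rfl | ⟨w', hw', hw'e⟩
    · simp
    · have := hval w' w hw'e
      simp only [pathGraph_adj, Fin.val_last]
      omega
    · have := hval u' u hu'e
      simp only [pathGraph_adj, Fin.val_last]
      omega
    · have := hI u' hu' w' hw'
      subst hu'e hw'e
      simp only [pathGraph_adj, emb2_val] at this ⊢
      exact this
  · intro J hJ
    rw [Finset.mem_filter] at hJ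
    rw [mem_indep]
    intro u hu w hw
    simp only [Finset.mem_filter, Finset.mem_univ, true_and] at hu hw
    have := (mem_indep.mp hJ.1) _ hu _ hw
    simp only [pathGraph_adj, emb2_val] at this ⊢
    exact this
  · intro I hI
    ext x
    simp only [Finset.mem_filter, Finset.mem_univ, true_and, Finset.mem_insert,
      Finset.mem_map]
    constructor
    · rintro (h | ⟨a, ha, hae⟩)
      · have := congrArg Fin.val h
        rw [emb2_val, Fin.val_last] at this
        omega
      · rwa [(emb2 n).injective hae] at ha
    · intro hx
      exact Or.inr ⟨x, hx, rfl⟩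
  · intro J hJ
    rw [Finset.mem_filter] at hJ
    ext b
    simp only [Finset.mem_insert, Finset.mem_map, Finset.mem_filter, Finset.mem_univ, true_and]
    constructor
    · rintro (rfl | ⟨a, ha, rfl⟩)
      · exact hJ.2
      · exact ha
    · intro hb
      by_cases hbl : b = Fin.last (n+1)
      · exact Or.inl hbl
      · have hbv : b.val < n + 1 := Fin.val_lt_last hbl
        have hbn : b.val ≠ n := by
          intro hbn
          have hadj : (SimpleGraph.pathGraph (n+2)).Adj b (Fin.last (n+1)) := by
            simp only [pathGraph_adj, Fin.val_last]
            omega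
          exact (mem_indep.mp hJ.1) _ hb _ hJ.2 hadj
        have hbv' : b.val < n := by omega
        refine Or.inr ⟨⟨b.val, hbv'⟩, ?_, by simp [Fin.ext_iff, emb2_val]⟩
        have : emb2 n ⟨b.val, hbv'⟩ = b := by simp [Fin.ext_iff, emb2_val]
        rwa [this]
  · intro I hI
    have hlast : Fin.last (n+1) ∉ I.map (emb2 n) := by
      simp only [Finset.mem_map, not_exists]
      rintro x ⟨hx, h⟩
      have := congrArg Fin.val h
      rw [emb2_val, Fin.val_last] at this
      omega
    rw [Finset.card_insert_of_notMem hlast, Finset.card_map, pow_succ]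
    ring

lemma A_rec (lam : ℝ) (n : ℕ) :
    hcZ (SimpleGraph.pathGraph (n+2)) lam
      = hcZ (SimpleGraph.pathGraph (n+1)) lam + lam * hcZ (SimpleGraph.pathGraph n) lam := by
  have split := Finset.sum_filter_add_sum_filter_not
    (indepFinsets (SimpleGraph.pathGraph (n+2)))
    (fun I => Fin.last (n+1) ∈ I) (fun I => lam ^ I.card)
  conv_lhs => rw [hcZ]
  rw [← split, hc_in, hc_out]
  ring

lemma hcZ_zero (lam : ℝ) : hcZ (SimpleGraph.pathGraph 0) lam = 1 := by
  have h : indepFinsets (SimpleGraph.pathGraph 0) = {∅} := by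
    ext I
    simp [mem_indep, Finset.eq_empty_of_isEmpty I]
  simp [hcZ, h]

lemma hcZ_one (lam : ℝ) : hcZ (SimpleGraph.pathGraph 1) lam = 1 + lam := by
  have h : indepFinsets (SimpleGraph.pathGraph 1) = Finset.univ := by
    ext I
    simp only [mem_indep, Finset.mem_univ, iff_true]
    intro u _ w _
    simp [pathGraph_adj, Fin.ext_iff, Fin.isValue]
  have h2 : (Finset.univ : Finset (Finset (Fin 1))) = {∅, {0}} := by decide
  rw [hcZ, h, h2, Finset.sum_insert (by decide), Finset.sum_singleton]
  simp

lemma closed_form (θ : ℝ) (hc : Real.cos θ ≠ 0) (hs : Real.sin θ ≠ 0) :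
    ∀ n : ℕ, hcZ (SimpleGraph.pathGraph n) (-1 / (4 * Real.cos θ ^ 2))
      = Real.sin (((n : ℝ) + 2) * θ) / (Real.sin θ * (2 * Real.cos θ) ^ (n + 1)) := by
  have h2c : (2 : ℝ) * Real.cos θ ≠ 0 := by
    intro h; apply hc; linarith
  have hp : ∀ m : ℕ, (2 * Real.cos θ) ^ m ≠ 0 := fun m => pow_ne_zero _ h2c
  have step : ∀ n : ℕ,
      Real.sin (((n : ℝ) + 2 + 2) * θ) / (Real.sin θ * (2 * Real.cos θ) ^ (n + 3))
      = Real.sin (((n : ℝ) + 1 + 2) * θ) / (Real.sin θ * (2 * Real.cos θ) ^ (n + 2))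
        + (-1 / (4 * Real.cos θ ^ 2)) *
          (Real.sin (((n : ℝ) + 2) * θ) / (Real.sin θ * (2 * Real.cos θ) ^ (n + 1))) := by
    intro n
    have h4 : Real.sin (((n : ℝ) + 2 + 2) * θ)
        = Real.sin (((n : ℝ) + 3) * θ) * Real.cos θ
          + Real.cos (((n : ℝ) + 3) * θ) * Real.sin θ := by
      rw [show ((n : ℝ) + 2 + 2) * θ = ((n : ℝ) + 3) * θ + θ by ring, Real.sin_add]
    have h2 : Real.sin (((n : ℝ) + 2) * θ)
        = Real.sin (((n : ℝ) + 3) * θ) * Real.cos θ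
          - Real.cos (((n : ℝ) + 3) * θ) * Real.sin θ := by
      rw [show ((n : ℝ) + 2) * θ = ((n : ℝ) + 3) * θ - θ by ring, Real.sin_sub]
    have h3 : ((n : ℝ) + 1 + 2) = (n : ℝ) + 3 := by ring
    rw [h4, h2, h3, pow_succ, pow_succ]
    field_simp
    ring
  have key : ∀ n : ℕ,
      (hcZ (SimpleGraph.pathGraph n) (-1 / (4 * Real.cos θ ^ 2))
        = Real.sin (((n : ℝ) + 2) * θ) / (Real.sin θ * (2 * Real.cos θ) ^ (n + 1)))
      ∧ (hcZ (SimpleGraph.pathGraph (n + 1)) (-1 / (4 * Real.cos θ ^ 2))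
        = Real.sin (((n : ℝ) + 1 + 2) * θ) / (Real.sin θ * (2 * Real.cos θ) ^ (n + 2))) := by
    intro n
    induction n with
    | zero =>
      constructor
      · rw [hcZ_zero]
        rw [show (((0 : ℕ) : ℝ) + 2) * θ = 2 * θ by norm_num, Real.sin_two_mul]
        field_simp
        ring
      · rw [hcZ_one]
        rw [show (((0 : ℕ) : ℝ) + 1 + 2) * θ = 3 * θ by norm_num, Real.sin_three_mul]
        have hsq : Real.sin θ ^ 2 = 1 - Real.cos θ ^ 2 := Real.sin_sq θ
        field_simp
        linear_combination (16 * Real.cos θ ^ 2) * hsq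
    | succ k ih =>
      have e1 : ((k + 1 : ℕ) : ℝ) + 2 = (k : ℝ) + 1 + 2 := by push_cast; ring
      have e2 : ((k + 1 : ℕ) : ℝ) + 1 + 2 = (k : ℝ) + 2 + 2 := by push_cast; ring
      refine ⟨by rw [e1]; exact ih.2, ?_⟩
      rw [e2, show k + 1 + 1 = k + 2 from rfl, A_rec, ih.1, ih.2]
      exact (step k).symm
  exact fun n => (key n).1

/-- Let `λ < -1/4` with `λ ∈ B`. Then there is an integer `n ≥ 1` such that the hard-core
partition function of the path with `n` vertices vanishes: `Z_{P_n}(λ) = 0`. -/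
theorem path_partition_function_zero (lam : ℝ) (hlam : lam < -1/4) (hbad : lam ∈ badSet) :
    ∃ n : ℕ, 1 ≤ n ∧ hcZ (SimpleGraph.pathGraph n) lam = 0 := by
  obtain ⟨θ, hθ, ⟨q, hq⟩, hlameq⟩ := hbad
  have hpi := Real.pi_pos
  have hc : Real.cos θ > 0 := Real.cos_pos_of_mem_Ioo ⟨by linarith [hθ.1], hθ.2⟩
  have hs : Real.sin θ > 0 := Real.sin_pos_of_pos_of_lt_pi hθ.1 (by linarith [hθ.2])
  have hq0 : (0 : ℝ) < (q : ℝ) := by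
    have := hθ.1
    rw [hq] at this
    nlinarith
  have hqh : (q : ℝ) < 1 / 2 := by
    have := hθ.2
    rw [hq] at this
    nlinarith
  have hq0' : (0 : ℚ) < q := by exact_mod_cast hq0
  have hqh' : q < 1 / 2 := by
    rw [show (1/2 : ℝ) = ((1/2 : ℚ) : ℝ) by norm_num] at hqh
    exact_mod_cast hqh
  have hnum : 1 ≤ q.num := Rat.num_pos.mpr hq0'
  have hden3 : 3 ≤ q.den := by
    by_contra h
    push_neg at h
    interval_cases hd : q.den
    · exact q.den_nz (by omega)
    · have := q.num_div_den
      rw [hd] at this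
      push_cast at this
      rw [div_one] at this
      rw [← this] at hqh'
      have : (1 : ℚ) ≤ q.num := by exact_mod_cast hnum
      linarith [hqh']
    · have hnd := q.num_div_den
      rw [hd] at hnd
      have h2q : (q.num : ℚ) = 2 * q := by
        field_simp at hnd
        push_cast at hnd; linarith
      have h1 : (1 : ℚ) ≤ (q.num : ℚ) := by exact_mod_cast hnum
      linarith
  refine ⟨q.den - 2, by omega, ?_⟩
  have hform := closed_form θ (ne_of_gt hc) (ne_of_gt hs) (q.den - 2)
  rw [hlameq]
  rw [hform]
  have hden : ((q.den - 2 : ℕ) : ℝ) + 2 = (q.den : ℝ) := by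
    have : 2 ≤ q.den := by omega
    push_cast [Nat.cast_sub this]
    ring
  rw [hden, hq]
  have harg : (q.den : ℝ) * ((q : ℝ) * Real.pi) = (q.num : ℝ) * Real.pi := by
    rw [Rat.cast_def]
    have : (q.den : ℝ) ≠ 0 := by positivity
    field_simp
    try ring
  rw [show (q.den : ℝ) * ((q : ℝ) * Real.pi) = (q.num : ℝ) * Real.pi from harg]
  rw [Real.sin_int_mul_pi]
  simp
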